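/- Let T_1,…,T_N be constant (parameter-independent) 2×2 complex matrices, and let G_1,…,G_N : U → GL_2(ℂ) be holomorphic maps such that, with A_i := G_i T_i G_i⁻¹, the equations ∂G_j/∂λ_i = A_i G_j/(λ_i − λ_j) for i ≠ j and ∂G_j/∂λ_j = −Σ_{i≠j} A_i G_j/(λ_i − λ_j) hold on U. Then the matrices A_j = G_j T_j G_j⁻¹ satisfy the Schlesinger system on U. -/

import Mathlib

open Matrix

attribute [local instance] Matrix.normedAddCommGroup Matrix.normedSpace

/-- The (2×2) Schlesinger system at a point `x = (λ_1,…,λ_N)`: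
`∂A_j/∂λ_i = [A_j, A_i]/(λ_j − λ_i)` for `i ≠ j` and
`∂A_j/∂λ_j = −Σ_{i≠j} [A_j, A_i]/(λ_j − λ_i)`. -/
def IsSchlesingerAt {N : ℕ} (A : Fin N → (Fin N → ℂ) → Matrix (Fin 2) (Fin 2) ℂ)
    (x : Fin N → ℂ) : Prop :=
  (∀ i j : Fin N, i ≠ j →
      fderiv ℂ (A j) x (Pi.single i 1) =
        (x j - x i)⁻¹ • (A j x * A i x - A i x * A j x)) ∧
  ∀ j : Fin N,
    fderiv ℂ (A j) x (Pi.single j 1) =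
      -∑ i ∈ Finset.univ.filter (· ≠ j),
        (x j - x i)⁻¹ • (A j x * A i x - A i x * A j x)

namespace SchlesingerAux

noncomputable section

abbrev M2 : Type := Matrix (Fin 2) (Fin 2) ℂ

/-- Matrix multiplication as a continuous bilinear map. -/
def mulCLM : M2 →L[ℂ] M2 →L[ℂ] M2 :=
  LinearMap.toContinuousLinearMap
    (((LinearMap.toContinuousLinearMap :
        (M2 →ₗ[ℂ] M2) ≃ₗ[ℂ] (M2 →L[ℂ] M2)).toLinearMap).comp (LinearMap.mul ℂ M2))

@[simp] lemma mulCLM_apply (a b : M2) : mulCLM a b = a * b := rfl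

/-- Entry extraction as a continuous linear map. -/
def entryCLM (a b : Fin 2) : M2 →L[ℂ] ℂ :=
  LinearMap.toContinuousLinearMap
    { toFun := fun A => A a b
      map_add' := fun _ _ => rfl
      map_smul' := fun _ _ => rfl }

@[simp] lemma entryCLM_apply (a b : Fin 2) (A : M2) : entryCLM a b A = A a b := rfl

/-- Adjugate of a 2×2 matrix as a continuous linear map. -/
def adjCLM : M2 →L[ℂ] M2 :=
  LinearMap.toContinuousLinearMap
    { toFun := fun A => A.adjugate
      map_add' := fun A B => by
        ext i j
        fin_cases i <;> fin_cases j <;>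
          simp [Matrix.adjugate_fin_two] <;> ring
      map_smul' := fun c A => by
        ext i j
        fin_cases i <;> fin_cases j <;>
          simp [Matrix.adjugate_fin_two] }

@[simp] lemma adjCLM_apply (A : M2) : adjCLM A = A.adjugate := rfl

end

end SchlesingerAux

open SchlesingerAux

/-- If constant matrices `T_j` and holomorphic invertible matrices `G_j` satisfy
`∂G_j/∂λ_i = A_i G_j/(λ_i − λ_j)` (`i ≠ j`) and `∂G_j/∂λ_j = −Σ_{i≠j} A_i G_j/(λ_i − λ_j)`,
where `A_i := G_i T_i G_i⁻¹`, then the `A_j = G_j T_j G_j⁻¹` satisfy the Schlesinger system. -/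
theorem schlesinger_of_G_equations (N : ℕ) (hN : 2 ≤ N)
    (U : Set (Fin N → ℂ)) (hU : IsOpen U)
    (hdist : ∀ x ∈ U, ∀ i j : Fin N, i ≠ j → x i ≠ x j)
    (T : Fin N → Matrix (Fin 2) (Fin 2) ℂ)
    (G : Fin N → (Fin N → ℂ) → Matrix (Fin 2) (Fin 2) ℂ)
    (hG : ∀ j, DifferentiableOn ℂ (G j) U)
    (hGinv : ∀ j, ∀ x ∈ U, IsUnit (G j x).det)
    (hGeq : ∀ x ∈ U, ∀ i j : Fin N, i ≠ j →
        fderiv ℂ (G j) x (Pi.single i 1) =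
          (x i - x j)⁻¹ • (G i x * T i * (G i x)⁻¹ * G j x))
    (hGeqDiag : ∀ x ∈ U, ∀ j : Fin N,
        fderiv ℂ (G j) x (Pi.single j 1) =
          -∑ i ∈ Finset.univ.filter (· ≠ j),
            (x i - x j)⁻¹ • (G i x * T i * (G i x)⁻¹ * G j x)) :
    ∀ x ∈ U, IsSchlesingerAt (fun j y => G j y * T j * (G j y)⁻¹) x := by
  intro x hx
  have hxmem : U ∈ nhds x := hU.mem_nhds hx
  -- The key derivative formula for `A j = G j * T j * (G j)⁻¹`.
  have key : ∀ (j : Fin N) (v : Fin N → ℂ),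
      fderiv ℂ (fun y => G j y * T j * (G j y)⁻¹) x v =
        (fderiv ℂ (G j) x v * (G j x)⁻¹) * (G j x * T j * (G j x)⁻¹) -
          (G j x * T j * (G j x)⁻¹) * (fderiv ℂ (G j) x v * (G j x)⁻¹) := by
    intro j v
    have hdetu : IsUnit (G j x).det := hGinv j x hx
    have hdetne : (G j x).det ≠ 0 := hdetu.ne_zero
    have hGdiff : DifferentiableAt ℂ (G j) x := (hG j).differentiableAt hxmem
    have hGd : HasFDerivAt (G j) (fderiv ℂ (G j) x) x := hGdiff.hasFDerivAt
    set B := fderiv ℂ (G j) x with hB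
    -- differentiability of the inverse
    have hHeq : (fun y => (G j y)⁻¹) =
        fun y => ((G j y).det)⁻¹ • (G j y).adjugate := by
      funext y
      rw [Matrix.inv_def, Ring.inverse_eq_inv]
    have hdetdiff : DifferentiableAt ℂ (fun y => (G j y).det) x := by
      have : (fun y => (G j y).det) =
          fun y => entryCLM 0 0 (G j y) * entryCLM 1 1 (G j y) -
            entryCLM 0 1 (G j y) * entryCLM 1 0 (G j y) := by
        funext y; simp [Matrix.det_fin_two]
      rw [this]
      exact (((entryCLM 0 0).differentiableAt.comp x hGdiff).mul
          ((entryCLM 1 1).differentiableAt.comp x hGdiff)).sub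
        (((entryCLM 0 1).differentiableAt.comp x hGdiff).mul
          ((entryCLM 1 0).differentiableAt.comp x hGdiff))
    have hHdiff : DifferentiableAt ℂ (fun y => (G j y)⁻¹) x := by
      rw [hHeq]
      exact (hdetdiff.inv hdetne).smul ((adjCLM.differentiableAt).comp x hGdiff)
    have hHd : HasFDerivAt (fun y => (G j y)⁻¹) (fderiv ℂ (fun y => (G j y)⁻¹) x) x :=
      hHdiff.hasFDerivAt
    set C := fderiv ℂ (fun y => (G j y)⁻¹) x with hC
    -- the product `G j * (G j)⁻¹` is constant `1` near `x`
    have hprod : HasFDerivAt (fun y => G j y * (G j y)⁻¹)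
        (mulCLM.precompR (Fin N → ℂ) (G j x) C +
          mulCLM.precompL (Fin N → ℂ) B ((G j x)⁻¹)) x := by
      have := mulCLM.hasFDerivAt_of_bilinear hGd hHd
      exact this
    have hconst : (fun y => G j y * (G j y)⁻¹) =ᶠ[nhds x] fun _ => (1 : M2) :=
      Filter.eventuallyEq_of_mem hxmem fun y hy => Matrix.mul_nonsing_inv _ (hGinv j y hy)
    have hzero : (mulCLM.precompR (Fin N → ℂ) (G j x) C +
        mulCLM.precompL (Fin N → ℂ) B ((G j x)⁻¹)) = 0 := by
      have h1 := hprod.fderiv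
      have h2 : fderiv ℂ (fun y => G j y * (G j y)⁻¹) x =
          fderiv ℂ (fun _ : Fin N → ℂ => (1 : M2)) x := hconst.fderiv_eq
      rw [fderiv_fun_const] at h2
      erw [h2] at h1
      exact h1.symm
    have hCv : ∀ w, G j x * C w + B w * (G j x)⁻¹ = 0 := by
      intro w
      have := congrFun (congrArg
        (fun (L : (Fin N → ℂ) →L[ℂ] M2) => (L : (Fin N → ℂ) → M2)) hzero) w
      exact this
    have hCval : ∀ w, C w = -((G j x)⁻¹ * B w * (G j x)⁻¹) := by
      intro w
      have h := hCv w
      have h' : G j x * C w = -(B w * (G j x)⁻¹) :=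
        eq_neg_of_add_eq_zero_left h
      calc C w = (G j x)⁻¹ * (G j x * C w) :=
            (Matrix.nonsing_inv_mul_cancel_left _ _ hdetu).symm
        _ = (G j x)⁻¹ * -(B w * (G j x)⁻¹) := by rw [h']
        _ = -((G j x)⁻¹ * B w * (G j x)⁻¹) := by
            rw [Matrix.mul_neg, Matrix.mul_assoc]
    -- derivative of `G j * T j`
    have hGT : HasFDerivAt (fun y => G j y * T j)
        (mulCLM.precompR (Fin N → ℂ) (G j x) (0 : (Fin N → ℂ) →L[ℂ] M2) +
          mulCLM.precompL (Fin N → ℂ) B (T j)) x := by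
      have := mulCLM.hasFDerivAt_of_bilinear hGd (hasFDerivAt_const (T j) x)
      exact this
    -- derivative of the full product
    have hA : HasFDerivAt (fun y => G j y * T j * (G j y)⁻¹)
        (mulCLM.precompR (Fin N → ℂ) (G j x * T j) C +
          mulCLM.precompL (Fin N → ℂ)
            (mulCLM.precompR (Fin N → ℂ) (G j x) (0 : (Fin N → ℂ) →L[ℂ] M2) +
              mulCLM.precompL (Fin N → ℂ) B (T j)) ((G j x)⁻¹)) x := by
      have := mulCLM.hasFDerivAt_of_bilinear hGT hHd
      exact this
    have hAv : fderiv ℂ (fun y => G j y * T j * (G j y)⁻¹) x v =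
        G j x * T j * C v + (G j x * 0 + B v * T j) * (G j x)⁻¹ :=
      congrArg (fun L => L v) hA.fderiv
    rw [hAv]
    simp only [ContinuousLinearMap.add_apply, ContinuousLinearMap.precompR_apply,
      ContinuousLinearMap.precompL_apply, ContinuousLinearMap.zero_apply, mulCLM_apply,
      ContinuousLinearMap.coe_zero, ContinuousLinearMap.compL_apply,
      ContinuousLinearMap.coe_comp', Function.comp_apply, Matrix.mul_zero, zero_add,
      Pi.zero_apply, Matrix.zero_mul, add_zero]
    rw [hCval v]
    -- now pure matrix algebra with the relation `(G j x)⁻¹ * (G j x * M) = M`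
    have e1 : B v * (G j x)⁻¹ * (G j x * T j * (G j x)⁻¹) = B v * T j * (G j x)⁻¹ := by
      calc B v * (G j x)⁻¹ * (G j x * T j * (G j x)⁻¹)
          = B v * ((G j x)⁻¹ * (G j x * (T j * (G j x)⁻¹))) := by
            simp only [Matrix.mul_assoc]
        _ = B v * (T j * (G j x)⁻¹) := by
            rw [Matrix.nonsing_inv_mul_cancel_left _ _ hdetu]
        _ = B v * T j * (G j x)⁻¹ := by simp only [Matrix.mul_assoc]
    have e2 : G j x * T j * -((G j x)⁻¹ * B v * (G j x)⁻¹) =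
        -((G j x * T j * (G j x)⁻¹) * (B v * (G j x)⁻¹)) := by
      rw [Matrix.mul_neg]
      simp only [Matrix.mul_assoc]
    rw [e2, e1]
    abel
  -- Now verify the Schlesinger equations.
  constructor
  · intro i j hij
    show fderiv ℂ (fun y => G j y * T j * (G j y)⁻¹) x (Pi.single i 1) = _
    rw [key j (Pi.single i 1), hGeq x hx i j hij]
    have hdetuj : IsUnit (G j x).det := hGinv j x hx
    rw [Matrix.smul_mul, Matrix.mul_nonsing_inv_cancel_right _ _ hdetuj]
    have hc : (x i - x j)⁻¹ = -(x j - x i)⁻¹ := by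
      rw [← inv_neg, neg_sub]
    rw [hc]
    set c := (x j - x i)⁻¹
    set Ai := G i x * T i * (G i x)⁻¹
    set Aj := G j x * T j * (G j x)⁻¹
    rw [Matrix.smul_mul, Matrix.mul_smul]
    module
  · intro j
    show fderiv ℂ (fun y => G j y * T j * (G j y)⁻¹) x (Pi.single j 1) = _
    rw [key j (Pi.single j 1), hGeqDiag x hx j]
    have hdetuj : IsUnit (G j x).det := hGinv j x hx
    have hS : (-∑ i ∈ Finset.univ.filter (· ≠ j),
          (x i - x j)⁻¹ • (G i x * T i * (G i x)⁻¹ * G j x)) * (G j x)⁻¹ =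
        -∑ i ∈ Finset.univ.filter (· ≠ j),
          (x i - x j)⁻¹ • (G i x * T i * (G i x)⁻¹) := by
      rw [Matrix.neg_mul, Finset.sum_mul]
      congr 1
      refine Finset.sum_congr rfl fun i _ => ?_
      rw [Matrix.smul_mul, Matrix.mul_nonsing_inv_cancel_right _ _ hdetuj]
    rw [hS]
    set Aj := G j x * T j * (G j x)⁻¹ with hAj
    beta_reduce
    rw [Matrix.neg_mul, Matrix.mul_neg, Finset.sum_mul, Matrix.mul_sum,
      neg_sub_neg, ← Finset.sum_sub_distrib, ← Finset.sum_neg_distrib]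
    refine Finset.sum_congr rfl fun i _ => ?_
    have hc : (x i - x j)⁻¹ = -(x j - x i)⁻¹ := by
      rw [← inv_neg, neg_sub]
    rw [hc]
    set d := (x j - x i)⁻¹
    set Ai := G i x * T i * (G i x)⁻¹
    rw [Matrix.smul_mul, Matrix.mul_smul]
    module
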